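/- For n ≥ 3, the vector space of 'Weyl candidates', i.e. 4-tensors W on Fin n satisfying W_{kl,ij} = −W_{lk,ij} = −W_{kl,ji} = W_{ij,kl}, the first Bianchi identity W_{kl,ij} + W_{ki,jl} + W_{kj,li} = 0, and the trace condition Σ_r W_{rl,rj} = 0, has dimension n²(n²−1)/12 − n(n+1)/2; in particular for n = 4 the dimension is 10. -/

import Mathlib

open Module Finset

noncomputable section StmtAux

/-- symmetric matrices submodule -/
def symM (α : Type) : Submodule ℝ (α → α → ℝ) where
  carrier := {M | ∀ i j, M i j = M j i}
  add_mem' := fun ha hb i j => by simp [ha i j, hb i j]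
  zero_mem' := fun i j => rfl
  smul_mem' := fun c a ha i j => by simp [ha i j]

lemma card_le_pairs (α : Type) [Fintype α] [LinearOrder α] :
    Fintype.card {p : α × α // p.1 ≤ p.2} =
      Fintype.card α * (Fintype.card α + 1) / 2 := by
  rw [← Fintype.card_congr (Sym2.sortEquiv (α := α)), Sym2.card, Nat.choose_two_right,
    Nat.add_sub_cancel, mul_comm]

lemma card_lt_pairs (α : Type) [Fintype α] [LinearOrder α] :
    Fintype.card {p : α × α // p.1 < p.2} =
      Fintype.card α * (Fintype.card α - 1) / 2 := by
  classical
  have e : {p : α × α // ¬ p.1 ≤ p.2} ≃ {p : α × α // p.1 < p.2} :=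
    { toFun := fun p => ⟨(p.1.2, p.1.1), lt_of_not_ge p.2⟩
      invFun := fun p => ⟨(p.1.2, p.1.1), not_le.mpr p.2⟩
      left_inv := fun p => by ext <;> rfl
      right_inv := fun p => by ext <;> rfl }
  have h1 : Fintype.card {p : α × α // ¬ p.1 ≤ p.2} =
      Fintype.card (α × α) - Fintype.card {p : α × α // p.1 ≤ p.2} :=
    Fintype.card_subtype_compl _
  rw [← Fintype.card_congr e, h1, card_le_pairs, Fintype.card_prod]
  obtain ⟨c, hc⟩ : ∃ c, Fintype.card α = c := ⟨_, rfl⟩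
  rw [hc]
  obtain ⟨t, ht⟩ := Nat.even_mul_succ_self c
  have e1 : c * (c + 1) = c * c + c := by ring
  rw [e1] at ht
  have e3 : c * (c - 1) + c = c * c := by
    cases c with
    | zero => simp
    | succ m => simp [Nat.succ_sub_one]; ring
  rw [e1]
  generalize hB : c * (c - 1) = B at e3 ⊢
  generalize hA : c * c = A at ht e3 ⊢
  omega

lemma finrank_symM_ordered (α : Type) [Fintype α] [LinearOrder α] :
    Module.finrank ℝ (symM α) =
      Fintype.card α * (Fintype.card α + 1) / 2 := by
  classical
  let f : symM α →ₗ[ℝ] ({p : α × α // p.1 ≤ p.2} → ℝ) :=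
    { toFun := fun M q => M.1 q.1.1 q.1.2
      map_add' := fun a b => rfl
      map_smul' := fun c a => rfl }
  have hbij : Function.Bijective f := by
    constructor
    · intro M N h
      ext i j
      rcases le_total i j with hij | hij
      · exact congrFun h ⟨(i, j), hij⟩
      · have h1 := congrFun h ⟨(j, i), hij⟩
        have := M.2 i j; have := N.2 i j
        simp only [f] at h1
        rw [show (M : α → α → ℝ) i j = M.1 j i from M.2 i j,
          show (N : α → α → ℝ) i j = N.1 j i from N.2 i j]
        exact h1
    · intro g
      refine ⟨⟨fun i j => if h : i ≤ j then g ⟨(i, j), h⟩ else g ⟨(j, i), le_of_not_ge h⟩,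
        ?_⟩, ?_⟩
      · intro i j
        dsimp only
        split_ifs with h1 h2 h2
        · have : i = j := le_antisymm h1 h2
          subst this; rfl
        · rfl
        · rfl
        · exact absurd (le_of_not_ge h1) h2
      · funext q
        obtain ⟨⟨a, b⟩, h⟩ := q
        exact dif_pos h
  rw [(LinearEquiv.ofBijective f hbij).finrank_eq,
    Module.finrank_fintype_fun_eq_card, card_le_pairs]

lemma finrank_symM (α : Type) [Fintype α] :
    Module.finrank ℝ (symM α) =
      Fintype.card α * (Fintype.card α + 1) / 2 := by
  classical
  let e := Fintype.equivFin α
  let F : symM α →ₗ[ℝ] symM (Fin (Fintype.card α)) :=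
    { toFun := fun M => ⟨fun i j => M.1 (e.symm i) (e.symm j), fun i j => M.2 _ _⟩
      map_add' := fun a b => rfl
      map_smul' := fun c a => rfl }
  let G : symM (Fin (Fintype.card α)) →ₗ[ℝ] symM α :=
    { toFun := fun M => ⟨fun i j => M.1 (e i) (e j), fun i j => M.2 _ _⟩
      map_add' := fun a b => rfl
      map_smul' := fun c a => rfl }
  have hFG : ∀ M, G (F M) = M := fun M => by
    apply Subtype.ext; funext i j; simp [F, G]
  have hGF : ∀ M, F (G M) = M := fun M => by
    apply Subtype.ext; funext i j; simp [F, G]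
  have := (LinearEquiv.ofLinear F G (by ext M : 1; exact hGF M) (by ext M : 1; exact hFG M)).finrank_eq
  rw [this, finrank_symM_ordered, Fintype.card_fin]

variable (n : ℕ)

abbrev Tn := Fin n → Fin n → Fin n → Fin n → ℝ

def symA : Submodule ℝ (Tn n) where
  carrier := {W | ∀ k l i j, W k l i j = - W l k i j ∧ W k l i j = - W k l j i ∧
    W k l i j = W i j k l}
  add_mem' := by
    intro a b ha hb k l i j
    obtain ⟨h1, h2, h3⟩ := ha k l i j
    obtain ⟨g1, g2, g3⟩ := hb k l i j
    refine ⟨?_, ?_, ?_⟩ <;> simp only [Pi.add_apply] <;> linarith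
  zero_mem' := by intro k l i j; simp
  smul_mem' := by
    intro c a ha k l i j
    obtain ⟨h1, h2, h3⟩ := ha k l i j
    refine ⟨?_, ?_, ?_⟩ <;> simp only [Pi.smul_apply, smul_eq_mul] <;>
      [rw [h1]; rw [h2]; rw [h3]] <;> ring

abbrev pairLT := {p : Fin n × Fin n // p.1 < p.2}

lemma finrank_symA :
    Module.finrank ℝ (symA n) =
      (n * (n - 1) / 2) * (n * (n - 1) / 2 + 1) / 2 := by
  classical
  let f : symA n →ₗ[ℝ] symM (pairLT n) :=
    { toFun := fun W => ⟨fun p q => W.1 p.1.1 p.1.2 q.1.1 q.1.2,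
        fun p q => (W.2 p.1.1 p.1.2 q.1.1 q.1.2).2.2⟩
      map_add' := fun a b => rfl
      map_smul' := fun c a => rfl }
  have hbij : Function.Bijective f := by
    constructor
    · intro W V h
      have h0 : ∀ p q : pairLT n, W.1 p.1.1 p.1.2 q.1.1 q.1.2 = V.1 p.1.1 p.1.2 q.1.1 q.1.2 :=
        fun p q => congrFun (congrFun (congrArg Subtype.val h) p) q
      apply Subtype.ext
      funext k l i j
      have inner : ∀ a b, a < b → W.1 a b i j = V.1 a b i j := by
        intro a b hab
        rcases lt_trichotomy i j with h' | h' | h'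
        · exact h0 ⟨(a, b), hab⟩ ⟨(i, j), h'⟩
        · subst h'
          have hw := (W.2 a b i i).2.1
          have hv := (V.2 a b i i).2.1
          linarith
        · have := h0 ⟨(a, b), hab⟩ ⟨(j, i), h'⟩
          rw [(W.2 a b i j).2.1, (V.2 a b i j).2.1, this]
      rcases lt_trichotomy k l with h' | h' | h'
      · exact inner k l h'
      · subst h'
        have hw := (W.2 k k i j).1
        have hv := (V.2 k k i j).1
        linarith
      · rw [(W.2 k l i j).1, (V.2 k l i j).1, inner l k h']
    · intro M
      let M' : Tn n := fun k l i j =>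
        if h : k < l ∧ i < j then M.1 ⟨(k, l), h.1⟩ ⟨(i, j), h.2⟩ else 0
      have hps : ∀ a b c d, M' a b c d = M' c d a b := by
        intro a b c d
        by_cases h : a < b ∧ c < d
        · rw [show M' a b c d = M.1 ⟨(a, b), h.1⟩ ⟨(c, d), h.2⟩ from dif_pos h,
            show M' c d a b = M.1 ⟨(c, d), h.2⟩ ⟨(a, b), h.1⟩ from dif_pos ⟨h.2, h.1⟩]
          exact M.2 _ _
        · rw [show M' a b c d = 0 from dif_neg h,
            show M' c d a b = 0 from dif_neg (fun hc => h ⟨hc.2, hc.1⟩)]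
      let W : Tn n := fun k l i j => M' k l i j - M' l k i j - M' k l j i + M' l k j i
      have hWmem : W ∈ symA n := by
        intro k l i j
        refine ⟨by simp only [W]; ring, by simp only [W]; ring, ?_⟩
        show M' k l i j - M' l k i j - M' k l j i + M' l k j i
          = M' i j k l - M' j i k l - M' i j l k + M' j i l k
        rw [hps k l i j, hps l k i j, hps k l j i, hps l k j i]; ring
      refine ⟨⟨W, hWmem⟩, ?_⟩
      apply Subtype.ext
      funext p q
      show M' p.1.1 p.1.2 q.1.1 q.1.2 - M' p.1.2 p.1.1 q.1.1 q.1.2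
        - M' p.1.1 p.1.2 q.1.2 q.1.1 + M' p.1.2 p.1.1 q.1.2 q.1.1 = M.1 p q
      rw [show M' p.1.1 p.1.2 q.1.1 q.1.2 = M.1 ⟨(p.1.1, p.1.2), p.2⟩ ⟨(q.1.1, q.1.2), q.2⟩
          from dif_pos ⟨p.2, q.2⟩,
        show M' p.1.2 p.1.1 q.1.1 q.1.2 = 0 from dif_neg (fun h => absurd h.1 (asymm p.2)),
        show M' p.1.1 p.1.2 q.1.2 q.1.1 = 0 from dif_neg (fun h => absurd h.2 (asymm q.2)),
        show M' p.1.2 p.1.1 q.1.2 q.1.1 = 0 from dif_neg (fun h => absurd h.1 (asymm p.2))]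
      simp
  have hcard : Fintype.card (pairLT n) = n * (n - 1) / 2 := by
    rw [card_lt_pairs, Fintype.card_fin]
  rw [(LinearEquiv.ofBijective f hbij).finrank_eq, finrank_symM, hcard]

def altM : Submodule ℝ (Tn n) where
  carrier := {ω | ∀ k l i j, ω k l i j = - ω l k i j ∧ ω k l i j = - ω k i l j ∧
    ω k l i j = - ω k l j i}
  add_mem' := by
    intro a b ha hb k l i j
    obtain ⟨h1, h2, h3⟩ := ha k l i j
    obtain ⟨g1, g2, g3⟩ := hb k l i j
    refine ⟨?_, ?_, ?_⟩ <;> simp only [Pi.add_apply] <;> linarith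
  zero_mem' := by intro k l i j; simp
  smul_mem' := by
    intro c a ha k l i j
    obtain ⟨h1, h2, h3⟩ := ha k l i j
    refine ⟨?_, ?_, ?_⟩ <;> simp only [Pi.smul_apply, smul_eq_mul] <;>
      [rw [h1]; rw [h2]; rw [h3]] <;> ring

section AltLemmas

variable {n}
variable {ω : Tn n}
  (hω : ∀ k l i j, ω k l i j = - ω l k i j ∧ ω k l i j = - ω k i l j ∧
    ω k l i j = - ω k l j i)

include hω

lemma alt_s13 (a b c d : Fin n) : ω a b c d = - ω c b a d := by
  rw [(hω a b c d).2.1, (hω a c b d).1, (hω c a b d).2.1]; ring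

lemma alt_s24 (a b c d : Fin n) : ω a b c d = - ω a d c b := by
  rw [(hω a b c d).2.2, (hω a b d c).2.1, (hω a d b c).2.2]; ring

lemma alt_s14 (a b c d : Fin n) : ω a b c d = - ω d b c a := by
  rw [alt_s13 hω a b c d, (hω c b a d).2.2, alt_s13 hω c b d a]; ring

lemma alt_swap (x y : Fin 4) (hxy : x ≠ y) (v : Fin 4 → Fin n) :
    ω (v (Equiv.swap x y 0)) (v (Equiv.swap x y 1)) (v (Equiv.swap x y 2))
      (v (Equiv.swap x y 3)) = - ω (v 0) (v 1) (v 2) (v 3) := by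
  fin_cases x <;> fin_cases y <;>
    first
      | exact absurd rfl hxy
      | exact (hω (v 1) (v 0) (v 2) (v 3)).1
      | exact alt_s13 hω (v 2) (v 1) (v 0) (v 3)
      | exact alt_s14 hω (v 3) (v 1) (v 2) (v 0)
      | exact (hω (v 0) (v 2) (v 1) (v 3)).2.1
      | exact alt_s24 hω (v 0) (v 3) (v 2) (v 1)
      | exact (hω (v 0) (v 1) (v 3) (v 2)).2.2

lemma alt_sign (σ : Equiv.Perm (Fin 4)) : ∀ v : Fin 4 → Fin n,
    ω (v (σ 0)) (v (σ 1)) (v (σ 2)) (v (σ 3)) =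
      ((Equiv.Perm.sign σ : ℤ) : ℝ) * ω (v 0) (v 1) (v 2) (v 3) := by
  refine Equiv.Perm.swap_induction_on σ ?_ ?_
  · intro v; simp
  · intro f x y hxy ih v
    have key := alt_swap hω x y hxy v
    have ihv := ih (fun a => v (Equiv.swap x y a))
    beta_reduce at ihv
    have hs : ((Equiv.Perm.sign (Equiv.swap x y * f) : ℤ) : ℝ)
        = -((Equiv.Perm.sign f : ℤ) : ℝ) := by
      rw [Equiv.Perm.sign_mul, Equiv.Perm.sign_swap hxy]; push_cast; ring
    show ω (v (Equiv.swap x y (f 0))) (v (Equiv.swap x y (f 1)))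
      (v (Equiv.swap x y (f 2))) (v (Equiv.swap x y (f 3))) = _
    rw [ihv, key, hs]; ring

end AltLemmas

section AltZero

variable {n}
variable {ω : Tn n}
  (hω : ∀ k l i j, ω k l i j = - ω l k i j ∧ ω k l i j = - ω k i l j ∧
    ω k l i j = - ω k l j i)

include hω

lemma alt_zero (h0 : ∀ k l i j : Fin n, k < l → l < i → i < j → ω k l i j = 0) :
    ∀ k l i j, ω k l i j = 0 := by
  intro k l i j
  have hv0 : ω k l i j = ω (![k, l, i, j] 0) (![k, l, i, j] 1) (![k, l, i, j] 2)
      (![k, l, i, j] 3) := rfl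
  set v : Fin 4 → Fin n := ![k, l, i, j] with hv
  by_cases hinj : Function.Injective v
  · set σ := Tuple.sort v with hσ
    have hmono : Monotone (v ∘ σ) := Tuple.monotone_sort v
    have hsm : StrictMono (v ∘ σ) := hmono.strictMono_of_injective (hinj.comp σ.injective)
    have hs := alt_sign hω σ v
    have hz : ω (v (σ 0)) (v (σ 1)) (v (σ 2)) (v (σ 3)) = 0 :=
      h0 _ _ _ _ (hsm (by decide : (0:Fin 4) < 1)) (hsm (by decide : (1:Fin 4) < 2))
        (hsm (by decide : (2:Fin 4) < 3))
    rw [hz] at hs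
    rw [hv0]
    rcases Int.units_eq_one_or (Equiv.Perm.sign σ) with h | h <;> rw [h] at hs <;>
      push_cast at hs <;> linarith
  · rw [Function.not_injective_iff] at hinj
    obtain ⟨x, y, hvxy, hxy⟩ := hinj
    have hsw := alt_swap hω x y hxy v
    have hfix : ∀ a, v (Equiv.swap x y a) = v a := by
      intro a
      rcases eq_or_ne a x with rfl | hax
      · rw [Equiv.swap_apply_left]; exact hvxy.symm
      rcases eq_or_ne a y with rfl | hay
      · rw [Equiv.swap_apply_right]; exact hvxy
      · rw [Equiv.swap_apply_of_ne_of_ne hax hay]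
    rw [hfix 0, hfix 1, hfix 2, hfix 3] at hsw
    rw [hv0]; linarith

end AltZero

abbrev quadLT := {q : (Fin n × Fin n) × (Fin n × Fin n) //
  q.1.1 < q.1.2 ∧ q.1.2 < q.2.1 ∧ q.2.1 < q.2.2}

lemma chain_iff_strictMono {u : Fin 4 → Fin n} :
    (u 0 < u 1 ∧ u 1 < u 2 ∧ u 2 < u 3) ↔ StrictMono u := by
  constructor
  · intro h
    rw [Fin.strictMono_iff_lt_succ]
    intro i
    fin_cases i
    · exact h.1
    · exact h.2.1
    · exact h.2.2
  · intro h
    exact ⟨h (by decide), h (by decide), h (by decide)⟩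

lemma perm_strictMono_eq_one : ∀ τ : Equiv.Perm (Fin 4), StrictMono ⇑τ → τ = 1 := by
  decide

lemma card_quadLT : Fintype.card (quadLT n) = n.choose 4 := by
  classical
  have e1 : quadLT n ≃ {u : Fin 4 → Fin n // StrictMono u} :=
    { toFun := fun q => ⟨![q.1.1.1, q.1.1.2, q.1.2.1, q.1.2.2],
        Iff.mp (chain_iff_strictMono n) ⟨q.2.1, q.2.2.1, q.2.2.2⟩⟩
      invFun := fun u => ⟨((u.1 0, u.1 1), (u.1 2, u.1 3)),
        ⟨u.2 (by decide), u.2 (by decide), u.2 (by decide)⟩⟩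
      left_inv := fun q => Subtype.ext rfl
      right_inv := fun u => Subtype.ext (by funext a; fin_cases a <;> rfl) }
  have e2 : {u : Fin 4 → Fin n // StrictMono u} ≃ {s : Finset (Fin n) // s.card = 4} :=
    { toFun := fun u => ⟨Finset.univ.image u.1, by
        rw [Finset.card_image_of_injective _ u.2.injective, Finset.card_univ,
          Fintype.card_fin]⟩
      invFun := fun s => ⟨s.1.orderEmbOfFin s.2, (s.1.orderEmbOfFin s.2).strictMono⟩
      left_inv := fun u => Subtype.ext
        (Finset.orderEmbOfFin_unique _ (fun x => Finset.mem_image_of_mem _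
          (Finset.mem_univ x)) u.2).symm
      right_inv := fun s => Subtype.ext (by
        have h := Finset.range_orderEmbOfFin s.1 s.2
        apply Finset.coe_injective
        rw [Finset.coe_image, Finset.coe_univ, Set.image_univ, h]) }
  rw [Fintype.card_congr (e1.trans e2), Fintype.card_finset_len, Fintype.card_fin]

lemma finrank_altM : Module.finrank ℝ (altM n) = n.choose 4 := by
  classical
  let f : altM n →ₗ[ℝ] (quadLT n → ℝ) :=
    { toFun := fun W q => W.1 q.1.1.1 q.1.1.2 q.1.2.1 q.1.2.2
      map_add' := fun a b => rfl
      map_smul' := fun c a => rfl }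
  have hbij : Function.Bijective f := by
    constructor
    · intro W V h
      apply Subtype.ext
      have hmem := (altM n).sub_mem W.2 V.2
      have hzero : ∀ k l i j : Fin n, k < l → l < i → i < j →
          (W.1 - V.1) k l i j = 0 := by
        intro k l i j h1 h2 h3
        have := congrFun h ⟨((k, l), (i, j)), ⟨h1, h2, h3⟩⟩
        simpa [f, sub_eq_zero] using this
      have := alt_zero (ω := W.1 - V.1) hmem hzero
      funext k l i j
      have h2 := this k l i j
      simpa [sub_eq_zero] using h2
    · intro g
      let G : (Fin 4 → Fin n) → ℝ := fun v =>
        if h : v 0 < v 1 ∧ v 1 < v 2 ∧ v 2 < v 3 then g ⟨((v 0, v 1), (v 2, v 3)), h⟩ else 0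
      let E : Tn n := fun k l i j =>
        ∑ σ : Equiv.Perm (Fin 4), ((Equiv.Perm.sign σ : ℤ) : ℝ) * G (![k, l, i, j] ∘ σ)
      have reindex : ∀ (s : Equiv.Perm (Fin 4)), Equiv.Perm.sign s = -1 →
          ∀ v : Fin 4 → Fin n,
          ∑ σ : Equiv.Perm (Fin 4), ((Equiv.Perm.sign σ : ℤ) : ℝ) * G ((v ∘ s) ∘ σ)
            = - ∑ σ : Equiv.Perm (Fin 4), ((Equiv.Perm.sign σ : ℤ) : ℝ) * G (v ∘ σ) := by
        intro s hs v
        have h1 : ∀ σ : Equiv.Perm (Fin 4),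
            ((Equiv.Perm.sign σ : ℤ) : ℝ) * G ((v ∘ s) ∘ σ)
              = -(((Equiv.Perm.sign (s * σ) : ℤ) : ℝ) * G (v ∘ ⇑(s * σ))) := by
          intro σ
          have e1 : (v ∘ ⇑s) ∘ ⇑σ = v ∘ ⇑(s * σ) := rfl
          rw [e1, Equiv.Perm.sign_mul, hs]
          push_cast
          ring
        rw [Finset.sum_congr rfl (fun σ _ => h1 σ), Finset.sum_neg_distrib]
        congr 1
        exact Equiv.sum_comp (Equiv.mulLeft s)
          (fun τ => ((Equiv.Perm.sign τ : ℤ) : ℝ) * G (v ∘ ⇑τ))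
      have hE : E ∈ altM n := by
        intro k l i j
        refine ⟨?_, ?_, ?_⟩
        · have e1 : ![l, k, i, j] = ![k, l, i, j] ∘ ⇑(Equiv.swap (0:Fin 4) 1) := by
            funext a; fin_cases a <;> rfl
          have := reindex (Equiv.swap 0 1) (Equiv.Perm.sign_swap (by decide)) ![k, l, i, j]
          show E k l i j = - E l k i j
          simp only [E, e1]
          rw [show (∑ σ : Equiv.Perm (Fin 4), ((Equiv.Perm.sign σ : ℤ) : ℝ) *
            G ((![k, l, i, j] ∘ ⇑(Equiv.swap (0:Fin 4) 1)) ∘ σ)) = _ from this]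
          ring
        · have e1 : ![k, i, l, j] = ![k, l, i, j] ∘ ⇑(Equiv.swap (1:Fin 4) 2) := by
            funext a; fin_cases a <;> rfl
          have := reindex (Equiv.swap 1 2) (Equiv.Perm.sign_swap (by decide)) ![k, l, i, j]
          show E k l i j = - E k i l j
          simp only [E, e1]
          rw [show (∑ σ : Equiv.Perm (Fin 4), ((Equiv.Perm.sign σ : ℤ) : ℝ) *
            G ((![k, l, i, j] ∘ ⇑(Equiv.swap (1:Fin 4) 2)) ∘ σ)) = _ from this]
          ring
        · have e1 : ![k, l, j, i] = ![k, l, i, j] ∘ ⇑(Equiv.swap (2:Fin 4) 3) := by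
            funext a; fin_cases a <;> rfl
          have := reindex (Equiv.swap 2 3) (Equiv.Perm.sign_swap (by decide)) ![k, l, i, j]
          show E k l i j = - E k l j i
          simp only [E, e1]
          rw [show (∑ σ : Equiv.Perm (Fin 4), ((Equiv.Perm.sign σ : ℤ) : ℝ) *
            G ((![k, l, i, j] ∘ ⇑(Equiv.swap (2:Fin 4) 3)) ∘ σ)) = _ from this]
          ring
      refine ⟨⟨E, hE⟩, ?_⟩
      funext q
      obtain ⟨⟨⟨k, l⟩, ⟨i, j⟩⟩, hq⟩ := q
      show E k l i j = g _
      have hv : StrictMono ![k, l, i, j] := Iff.mp (chain_iff_strictMono n) hq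
      rw [show E k l i j = ∑ σ : Equiv.Perm (Fin 4),
        ((Equiv.Perm.sign σ : ℤ) : ℝ) * G (![k, l, i, j] ∘ σ) from rfl]
      rw [Finset.sum_eq_single 1]
      · simp only [Equiv.Perm.sign_one]
        have : G (![k, l, i, j] ∘ ⇑(1 : Equiv.Perm (Fin 4))) = g ⟨((k, l), (i, j)), hq⟩ :=
          dif_pos hq
        rw [this]
        push_cast
        ring
      · intro σ _ hσ
        have hG : G (![k, l, i, j] ∘ ⇑σ) = 0 := by
          apply dif_neg
          intro hc
          have hsm : StrictMono (![k, l, i, j] ∘ ⇑σ) := Iff.mp (chain_iff_strictMono n) hc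
          have hσm : StrictMono ⇑σ := by
            intro a b hab
            have := hsm hab
            exact (hv.lt_iff_lt).mp this
          exact hσ (perm_strictMono_eq_one σ hσm)
        rw [hG, mul_zero]
      · intro h; exact absurd (Finset.mem_univ 1) h
  rw [(LinearEquiv.ofBijective f hbij).finrank_eq, Module.finrank_fintype_fun_eq_card,
    card_quadLT]

def bianchi : Tn n →ₗ[ℝ] Tn n where
  toFun W := fun k l i j => W k l i j + W k i j l + W k j l i
  map_add' W V := by funext k l i j; simp only [Pi.add_apply]; ring
  map_smul' c W := by funext k l i j; simp only [Pi.smul_apply, smul_eq_mul,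
    RingHom.id_apply]; ring

def ricci : Tn n →ₗ[ℝ] (Fin n → Fin n → ℝ) where
  toFun W := fun l j => ∑ r, W r l r j
  map_add' W V := by funext l j; simp [Finset.sum_add_distrib]
  map_smul' c W := by funext l j; simp [Finset.mul_sum]

lemma altM_le_symA : altM n ≤ symA n := by
  intro ω hω
  intro k l i j
  refine ⟨(hω k l i j).1, (hω k l i j).2.2, ?_⟩
  rw [alt_s13 hω k l i j, alt_s24 hω i l k j]
  ring

lemma bianchi_alt (ω : Tn n) (hω : ω ∈ altM n) (k l i j : Fin n) :
    bianchi n ω k l i j = 3 * ω k l i j := by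
  have e1 : ω k i j l = ω k j l i := by
    rw [(hω k i j l).2.1, (hω k j i l).2.2]; ring
  have e2 : ω k j l i = ω k l i j := by
    rw [alt_s24 hω k j l i, (hω k i l j).2.1]; ring
  show ω k l i j + ω k i j l + ω k j l i = 3 * ω k l i j
  rw [e1, e2]; ring

lemma map_bianchi_symA : (symA n).map (bianchi n) = altM n := by
  apply le_antisymm
  · rintro _ ⟨W, hW, rfl⟩
    intro k l i j
    have A1 : ∀ a b c d, W a b c d = - W b a c d := fun a b c d => (hW a b c d).1
    have A2 : ∀ a b c d, W a b c d = - W a b d c := fun a b c d => (hW a b c d).2.1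
    have A3 : ∀ a b c d, W a b c d = W c d a b := fun a b c d => (hW a b c d).2.2
    refine ⟨?_, ?_, ?_⟩
    · show W k l i j + W k i j l + W k j l i =
        -(W l k i j + W l i j k + W l j k i)
      have e1 : W l i j k = - W k j l i := by rw [A3 l i j k, A1 j k l i]
      have e2 : W l j k i = - W k i j l := by rw [A3 l j k i, A2 k i l j]
      rw [e1, e2, A1 l k i j]; ring
    · show W k l i j + W k i j l + W k j l i =
        -(W k i l j + W k l j i + W k j i l)
      rw [A2 k i l j, A2 k l j i, A2 k j i l]; ring
    · show W k l i j + W k i j l + W k j l i =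
        -(W k l j i + W k j i l + W k i l j)
      rw [A2 k l j i, A2 k j i l, A2 k i l j]; ring
  · intro ω hω
    refine ⟨(3 : ℝ)⁻¹ • ω, Submodule.smul_mem _ _ (altM_le_symA n hω), ?_⟩
    rw [map_smul]
    funext k l i j
    show (3 : ℝ)⁻¹ * bianchi n ω k l i j = ω k l i j
    rw [bianchi_alt n ω hω]
    ring

def deltaF : Fin n → Fin n → ℝ := fun a b => if a = b then 1 else 0

lemma deltaF_symm (a b : Fin n) : deltaF n a b = deltaF n b a := by
  simp [deltaF, eq_comm]

def knT (h : Fin n → Fin n → ℝ) : Tn n := fun k l i j =>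
  h k i * deltaF n l j + h l j * deltaF n k i - h k j * deltaF n l i - h l i * deltaF n k j

lemma knT_mem_symA (h : Fin n → Fin n → ℝ) (hsym : ∀ a b, h a b = h b a) :
    knT n h ∈ symA n := by
  intro k l i j
  refine ⟨by simp only [knT]; ring, by simp only [knT]; ring, ?_⟩
  show h k i * deltaF n l j + h l j * deltaF n k i - h k j * deltaF n l i
      - h l i * deltaF n k j
    = h i k * deltaF n j l + h j l * deltaF n i k - h i l * deltaF n j k
      - h j k * deltaF n i l
  rw [hsym i k, hsym j l, hsym i l, hsym j k, deltaF_symm n j l, deltaF_symm n i k,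
    deltaF_symm n j k, deltaF_symm n i l]
  ring

lemma knT_mem_ker (h : Fin n → Fin n → ℝ) (hsym : ∀ a b, h a b = h b a) :
    bianchi n (knT n h) = 0 := by
  funext k l i j
  show knT n h k l i j + knT n h k i j l + knT n h k j l i = 0
  simp only [knT]
  rw [hsym l j, hsym i l, hsym j i, deltaF_symm n l j, deltaF_symm n i l, deltaF_symm n j i]
  ring

lemma knT_ricci (h : Fin n → Fin n → ℝ) (l j : Fin n) :
    ricci n (knT n h) l j = (∑ r, h r r) * deltaF n l j + (n : ℝ) * h l j - 2 * h l j := by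
  show (∑ r, knT n h r l r j) = _
  simp only [knT]
  rw [Finset.sum_sub_distrib, Finset.sum_sub_distrib, Finset.sum_add_distrib]
  have e1 : ∑ r, h r r * deltaF n l j = (∑ r, h r r) * deltaF n l j := by
    rw [Finset.sum_mul]
  have e2 : ∑ r : Fin n, h l j * deltaF n r r = (n : ℝ) * h l j := by
    simp [deltaF, Finset.sum_const, mul_comm]
  have e3 : ∑ r, h r j * deltaF n l r = h l j := by
    simp only [deltaF, mul_ite, mul_one, mul_zero]
    rw [Finset.sum_ite_eq (Finset.univ) l (fun r => h r j)]
    simp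
  have e4 : ∑ r, h l r * deltaF n r j = h l j := by
    simp only [deltaF, mul_ite, mul_one, mul_zero]
    rw [Finset.sum_ite_eq' (Finset.univ) j (fun r => h l r)]
    simp
  rw [e1, e2, e3, e4]
  ring

lemma map_ricci_eq (hn : 3 ≤ n) :
    (symA n ⊓ LinearMap.ker (bianchi n)).map (ricci n) = symM (Fin n) := by
  apply le_antisymm
  · rintro _ ⟨W, hW, rfl⟩
    have hWA : W ∈ symA n := hW.1
    intro l j
    show (∑ r, W r l r j) = ∑ r, W r j r l
    exact Finset.sum_congr rfl (fun r _ => (hWA r l r j).2.2)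
  · intro s hs
    have hn3 : (3 : ℝ) ≤ (n : ℝ) := by exact_mod_cast hn
    have hn1 : ((n : ℝ) - 1) ≠ 0 := by linarith
    have hn2 : ((n : ℝ) - 2) ≠ 0 := by linarith
    set t : ℝ := ∑ r, s r r with ht
    set c : ℝ := t / (2 * ((n : ℝ) - 1)) with hc
    let h : Fin n → Fin n → ℝ := fun a b => ((n : ℝ) - 2)⁻¹ * (s a b - c * deltaF n a b)
    have hsym : ∀ a b, h a b = h b a := by
      intro a b
      simp only [h]
      rw [hs a b, deltaF_symm n a b]
    refine ⟨knT n h, Submodule.mem_inf.mpr ⟨knT_mem_symA n h hsym, by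
      rw [LinearMap.mem_ker]; exact knT_mem_ker n h hsym⟩, ?_⟩
    funext l j
    rw [knT_ricci n h l j]
    have hδ : (∑ r : Fin n, deltaF n r r) = (n : ℝ) := by simp [deltaF]
    have htr : (∑ r, h r r) = ((n : ℝ) - 2)⁻¹ * (t - c * (n : ℝ)) := by
      simp only [h]
      rw [← Finset.mul_sum, Finset.sum_sub_distrib, ← Finset.mul_sum, hδ, ← ht]
    rw [htr]
    show _ = s l j
    have h1 : t - c * (n : ℝ) = c * ((n : ℝ) - 2) := by
      rw [hc]; field_simp; ring
    have h2 : ((n : ℝ) - 2)⁻¹ * (c * ((n : ℝ) - 2)) = c := by field_simp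
    have h3 : (n : ℝ) * h l j - 2 * h l j = s l j - c * deltaF n l j := by
      simp only [h]; field_simp
    rw [h1, h2]
    linarith [h3]

lemma finrank_map_inf {V W : Type} [AddCommGroup V] [Module ℝ V] [AddCommGroup W]
    [Module ℝ W] [FiniteDimensional ℝ V] (p : Submodule ℝ V) (f : V →ₗ[ℝ] W) :
    Module.finrank ℝ p =
      Module.finrank ℝ (p.map f) + Module.finrank ℝ (p ⊓ LinearMap.ker f : Submodule ℝ V) := by
  have h := LinearMap.finrank_range_add_finrank_ker (f.domRestrict p)
  rw [LinearMap.range_domRestrict] at h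
  have hker : LinearMap.ker (f.domRestrict p) =
      (p ⊓ LinearMap.ker f).comap p.subtype := by
    rw [LinearMap.ker_domRestrict]
    ext x
    simp [Submodule.mem_comap, x.2]
  rw [hker, (Submodule.comapSubtypeEquivOfLe
    (inf_le_left : p ⊓ LinearMap.ker f ≤ p)).finrank_eq] at h
  exact h.symm

lemma key_arith (k : ℕ) :
    ((k+3) * ((k+3) - 1) / 2) * ((k+3) * ((k+3) - 1) / 2 + 1) / 2
      = (k+3).choose 4 + (k+3)^2 * ((k+3)^2 - 1) / 12 := by
  have hsub1 : (k+3) * ((k+3) - 1) = k^2 + 5*k + 6 := by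
    rw [show (k+3) - 1 = k + 2 from rfl]; ring
  have hsub2 : (k+3)^2 - 1 = k^2 + 6*k + 8 := by
    rw [show (k+3)^2 = (k^2 + 6*k + 8) + 1 from by ring]
    simp
  obtain ⟨u, hu⟩ := Nat.even_mul_succ_self (k+2)
  -- m : value of (k+3)*((k+3)-1)/2
  have hm : (k+3) * ((k+3) - 1) / 2 = (k+2) * (k+3) / 2 := by
    rw [hsub1]; congr 1; ring
  have hm2 : (k+2) * (k+3) / 2 * 2 = (k+2) * (k+3) := by
    rw [show (k+2) * (k+3) = u + u from by rw [← hu]]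
    omega
  set m := (k+2) * (k+3) / 2 with hmdef
  obtain ⟨w, hw⟩ := Nat.even_mul_succ_self m
  have hX : m * (m + 1) / 2 * 2 = m * (m+1) := by
    rw [show m * (m+1) = w + w from by rw [← hw]]
    omega
  -- choose
  have hdvd : 24 ∣ (k+3).descFactorial 4 := by
    have h := Nat.factorial_dvd_descFactorial (k+3) 4
    rwa [show Nat.factorial 4 = 24 from by norm_num [Nat.factorial]] at h
  have hc : (k+3).choose 4 * 24 = (k+3) * (k+2) * (k+1) * k := by
    rw [Nat.choose_eq_descFactorial_div_factorial,
      show Nat.factorial 4 = 24 from by norm_num [Nat.factorial],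
      Nat.div_mul_cancel hdvd]
    simp [Nat.descFactorial]
    ring
  -- divisibility by 12
  have hd12 : 12 ∣ (k+3)^2 * ((k+3)^2 - 1) := by
    have hz : ∀ m : ZMod 12, m^2 * (m^2 - 1) = 0 := by decide
    have : (((k+3)^2 * ((k+3)^2 - 1) : ℕ) : ZMod 12) = 0 := by
      rw [Nat.cast_mul, Nat.cast_sub (Nat.one_le_pow _ _ (by omega))]
      push_cast
      exact hz ((k : ZMod 12) + 3)
    exact (ZMod.natCast_eq_zero_iff _ _).mp this
  have hD : (k+3)^2 * ((k+3)^2 - 1) / 12 * 12 = (k+3)^2 * ((k+3)^2 - 1) :=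
    Nat.div_mul_cancel hd12
  -- final: multiply by 24
  apply Nat.eq_of_mul_eq_mul_right (show 0 < 24 by norm_num)
  have e24 : m * (m + 1) / 2 * 24 = 3 * ((k^2+5*k+6) * (k^2+5*k+8)) := by
    have h8 : m * (m + 1) / 2 * 8 = (2*m) * (2*m + 2) := by
      have := hX
      nlinarith [hX]
    have h2m : 2 * m = k^2 + 5*k + 6 := by
      have := hm2
      have : (k+2)*(k+3) = k^2 + 5*k + 6 := by ring
      omega
    calc m * (m + 1) / 2 * 24 = (m * (m + 1) / 2 * 8) * 3 := by ring
      _ = (2*m) * (2*m + 2) * 3 := by rw [h8]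
      _ = 3 * ((k^2+5*k+6) * (k^2+5*k+6 + 2)) := by rw [h2m]; ring
      _ = 3 * ((k^2+5*k+6) * (k^2+5*k+8)) := by ring
  have ec : (k+3).choose 4 * 24 = (k+3) * (k+2) * (k+1) * k := hc
  have eD : (k+3)^2 * ((k+3)^2 - 1) / 12 * 24 = ((k+3)^2 * (k^2+6*k+8)) * 2 := by
    calc (k+3)^2 * ((k+3)^2 - 1) / 12 * 24 = ((k+3)^2 * ((k+3)^2 - 1) / 12 * 12) * 2 := by ring
      _ = ((k+3)^2 * ((k+3)^2 - 1)) * 2 := by rw [hD]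
      _ = ((k+3)^2 * (k^2+6*k+8)) * 2 := by rw [hsub2]
  rw [hm, e24]
  conv_rhs => rw [add_mul]
  rw [ec, eD]
  ring

end StmtAux

theorem stmt_5 (n : ℕ) (hn : 3 ≤ n)
    (S : Submodule ℝ (Fin n → Fin n → Fin n → Fin n → ℝ))
    (hS : ∀ W, W ∈ S ↔
      ((∀ k l i j, W k l i j = - W l k i j ∧ W k l i j = - W k l j i ∧
          W k l i j = W i j k l) ∧
        (∀ k l i j, W k l i j + W k i j l + W k j l i = 0) ∧
        (∀ l j, ∑ r, W r l r j = 0))) :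
    Module.finrank ℝ S = n ^ 2 * (n ^ 2 - 1) / 12 - n * (n + 1) / 2 ∧
      (n = 4 → Module.finrank ℝ S = 10) := by
  have hSeq : S = (symA n ⊓ LinearMap.ker (bianchi n)) ⊓ LinearMap.ker (ricci n) := by
    ext W
    rw [hS]
    simp only [Submodule.mem_inf, LinearMap.mem_ker]
    constructor
    · rintro ⟨h1, h2, h3⟩
      refine ⟨⟨h1, ?_⟩, ?_⟩
      · funext k l i j; exact h2 k l i j
      · funext l j; exact h3 l j
    · rintro ⟨⟨h1, h2⟩, h3⟩
      exact ⟨h1, fun k l i j => congrFun (congrFun (congrFun (congrFun h2 k) l) i) j,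
        fun l j => congrFun (congrFun h3 l) j⟩
  have E1 := finrank_map_inf (symA n) (bianchi n)
  rw [map_bianchi_symA, finrank_symA, finrank_altM] at E1
  have E2 := finrank_map_inf (symA n ⊓ LinearMap.ker (bianchi n)) (ricci n)
  rw [map_ricci_eq n hn, finrank_symM, Fintype.card_fin] at E2
  obtain ⟨k, rfl⟩ : ∃ k, n = k + 3 := ⟨n - 3, by omega⟩
  have key := key_arith k
  have hA : Module.finrank ℝ ((symA (k+3) ⊓ LinearMap.ker (bianchi (k+3))) : Submodule ℝ (Tn (k+3)))
      = (k+3)^2 * ((k+3)^2 - 1) / 12 :=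
    Nat.add_left_cancel (E1.symm.trans key)
  rw [E2] at hA
  rw [hSeq]
  constructor
  · exact Nat.eq_sub_of_add_eq (by rw [Nat.add_comm]; exact hA)
  · intro h4
    have hk : k = 1 := by omega
    subst hk
    norm_num at hA
    linarith [hA]
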